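/- The map from ℂ⁶ to the set of ideals of ℂ[u,v] sending (A, B, C, p, q, r) to the ideal (v − (A·u² + B·u + C), u³ + p·u² + q·u + r) is injective. -/

import Mathlib

open MvPolynomial

private lemma quad_coeff_eq {a b c a' b' c' : ℂ}
    (h : Polynomial.C a * Polynomial.X ^ 2 + Polynomial.C b * Polynomial.X + Polynomial.C c =
      Polynomial.C a' * Polynomial.X ^ 2 + Polynomial.C b' * Polynomial.X + Polynomial.C c') :
    a = a' ∧ b = b' ∧ c = c' := by
  refine ⟨?_, ?_, ?_⟩
  · have := congrArg (fun f => Polynomial.coeff f 2) h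
    simpa using this
  · have := congrArg (fun f => Polynomial.coeff f 1) h
    simpa using this
  · have := congrArg (fun f => Polynomial.coeff f 0) h
    simpa using this

private lemma cubic_degree (p q r : ℂ) :
    (Polynomial.X ^ 3 + Polynomial.C p * Polynomial.X ^ 2 + Polynomial.C q * Polynomial.X +
      Polynomial.C r : Polynomial ℂ).degree = 3 := by
  compute_degree!

private lemma quad_degree_lt (a b c : ℂ) :
    (Polynomial.C a * Polynomial.X ^ 2 + Polynomial.C b * Polynomial.X + Polynomial.C c :
      Polynomial ℂ).degree < 3 := by
  apply lt_of_le_of_lt (b := 2)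
  · compute_degree
  · norm_num

/-- The map `ℂ⁶ → {ideals of ℂ[u,v]}` sending `(A, B, C, p, q, r)` to the ideal
`(v − (A·u² + B·u + C), u³ + p·u² + q·u + r)` (with `u = X 0`, `v = X 1`) is injective. -/
theorem hilbert_param_injective :
    Function.Injective
      (fun t : ℂ × ℂ × ℂ × ℂ × ℂ × ℂ =>
        Ideal.span
          {(X 1 : MvPolynomial (Fin 2) ℂ) - (C t.1 * X 0 ^ 2 + C t.2.1 * X 0 + C t.2.2.1),
            X 0 ^ 3 + C t.2.2.2.1 * X 0 ^ 2 + C t.2.2.2.2.1 * X 0 + C t.2.2.2.2.2}) := by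
  rintro ⟨a, b, c, p, q, r⟩ ⟨a', b', c', p', q', r'⟩ h
  simp only at h
  -- substitution map  u ↦ X, v ↦ a X² + b X + c
  set Q : Polynomial ℂ :=
    Polynomial.C a * Polynomial.X ^ 2 + Polynomial.C b * Polynomial.X + Polynomial.C c with hQ
  set Q' : Polynomial ℂ :=
    Polynomial.C a' * Polynomial.X ^ 2 + Polynomial.C b' * Polynomial.X + Polynomial.C c' with hQ'
  set G : Polynomial ℂ :=
    Polynomial.X ^ 3 + Polynomial.C p * Polynomial.X ^ 2 + Polynomial.C q * Polynomial.X +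
      Polynomial.C r with hG
  set G' : Polynomial ℂ :=
    Polynomial.X ^ 3 + Polynomial.C p' * Polynomial.X ^ 2 + Polynomial.C q' * Polynomial.X +
      Polynomial.C r' with hG'
  set φ : MvPolynomial (Fin 2) ℂ →ₐ[ℂ] Polynomial ℂ := aeval ![Polynomial.X, Q] with hφ
  have hφ0 : φ (X 0) = Polynomial.X := by simp [hφ]
  have hφ1 : φ (X 1) = Q := by simp [hφ]
  have hφC : ∀ z : ℂ, φ (C z) = Polynomial.C z := by
    intro z; simp [hφ, MvPolynomial.aeval_C, Polynomial.algebraMap_eq]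
  -- members of the first ideal map into the ideal (G)
  have key : ∀ x ∈ Ideal.span
      {(X 1 : MvPolynomial (Fin 2) ℂ) - (C a * X 0 ^ 2 + C b * X 0 + C c),
        X 0 ^ 3 + C p * X 0 ^ 2 + C q * X 0 + C r}, G ∣ φ x := by
    intro x hx
    have hmem := Ideal.mem_map_of_mem φ hx
    rw [Ideal.map_span, Set.image_insert_eq, Set.image_singleton] at hmem
    have hfz : φ ((X 1 : MvPolynomial (Fin 2) ℂ) - (C a * X 0 ^ 2 + C b * X 0 + C c)) = 0 := by
      simp only [map_sub, map_add, map_mul, map_pow, hφ0, hφ1, hφC]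
      rw [hQ]; ring
    have hgG : φ ((X 0 : MvPolynomial (Fin 2) ℂ) ^ 3 + C p * X 0 ^ 2 + C q * X 0 + C r) = G := by
      simp only [map_add, map_mul, map_pow, hφ0, hφC]
      rfl
    rw [hfz, hgG] at hmem
    rw [Ideal.span_insert, Ideal.span_singleton_eq_bot.mpr rfl, bot_sup_eq,
      Ideal.mem_span_singleton] at hmem
    exact hmem
  -- the generators of the second ideal lie in the first
  have hf' : ((X 1 : MvPolynomial (Fin 2) ℂ) - (C a' * X 0 ^ 2 + C b' * X 0 + C c')) ∈
      Ideal.span {(X 1 : MvPolynomial (Fin 2) ℂ) - (C a * X 0 ^ 2 + C b * X 0 + C c),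
        X 0 ^ 3 + C p * X 0 ^ 2 + C q * X 0 + C r} := by
    rw [h]; exact Ideal.subset_span (Set.mem_insert _ _)
  have hg' : ((X 0 : MvPolynomial (Fin 2) ℂ) ^ 3 + C p' * X 0 ^ 2 + C q' * X 0 + C r') ∈
      Ideal.span {(X 1 : MvPolynomial (Fin 2) ℂ) - (C a * X 0 ^ 2 + C b * X 0 + C c),
        X 0 ^ 3 + C p * X 0 ^ 2 + C q * X 0 + C r} := by
    rw [h]; exact Ideal.subset_span (Set.mem_insert_of_mem _ rfl)
  have hdvd1 : G ∣ (Q - Q') := by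
    have := key _ hf'
    have heq : φ ((X 1 : MvPolynomial (Fin 2) ℂ) - (C a' * X 0 ^ 2 + C b' * X 0 + C c')) =
        Q - Q' := by
      simp only [map_sub, map_add, map_mul, map_pow, hφ0, hφ1, hφC]
      rfl
    rwa [heq] at this
  have hdvd2 : G ∣ (G' - G) := by
    have hG'dvd : G ∣ G' := by
      have := key _ hg'
      have heq : φ ((X 0 : MvPolynomial (Fin 2) ℂ) ^ 3 + C p' * X 0 ^ 2 + C q' * X 0 + C r') =
          G' := by
        simp only [map_add, map_mul, map_pow, hφ0, hφC]
        rfl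
      rwa [heq] at this
    exact dvd_sub hG'dvd dvd_rfl
  have hGdeg : G.degree = 3 := cubic_degree p q r
  have hQQ' : Q - Q' = 0 := by
    refine Polynomial.eq_zero_of_dvd_of_degree_lt hdvd1 ?_
    rw [hGdeg]
    calc (Q - Q').degree ≤ max Q.degree Q'.degree := Polynomial.degree_sub_le _ _
      _ < 3 := max_lt (quad_degree_lt a b c) (quad_degree_lt a' b' c')
  have hGG' : G' - G = 0 := by
    refine Polynomial.eq_zero_of_dvd_of_degree_lt hdvd2 ?_
    rw [hGdeg, hG, hG']
    have : (Polynomial.X ^ 3 + Polynomial.C p' * Polynomial.X ^ 2 + Polynomial.C q' * Polynomial.X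
        + Polynomial.C r') - (Polynomial.X ^ 3 + Polynomial.C p * Polynomial.X ^ 2 +
        Polynomial.C q * Polynomial.X + Polynomial.C r) =
        Polynomial.C (p' - p) * Polynomial.X ^ 2 + Polynomial.C (q' - q) * Polynomial.X +
        Polynomial.C (r' - r) := by
      simp only [Polynomial.C_sub]; ring
    rw [this]
    exact quad_degree_lt _ _ _
  have h1 : Q = Q' := sub_eq_zero.mp hQQ'
  have h2 : G' = G := sub_eq_zero.mp hGG'
  rw [hQ, hQ'] at h1
  obtain ⟨ha, hb, hc⟩ := quad_coeff_eq h1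
  rw [hG, hG'] at h2
  have h2' : Polynomial.C p' * Polynomial.X ^ 2 + Polynomial.C q' * Polynomial.X +
      Polynomial.C r' = Polynomial.C p * Polynomial.X ^ 2 + Polynomial.C q * Polynomial.X +
      Polynomial.C r := by
    have := congrArg (fun f => f - Polynomial.X ^ 3) h2
    linear_combination this
  obtain ⟨hp, hq, hr⟩ := quad_coeff_eq h2'
  simp [ha, hb, hc, hp.symm, hq.symm, hr.symm]
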